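/- Let W ⊆ (ℝmax^n)^2 be either a closed congruence or a closed polar cone. Then for every g ∈ ℝmax^n and every β ∈ ℝmax with g_i ≤ β for all i, one has (ḡ^β, g) ∈ W. -/

import Mathlib

open scoped Classical

noncomputable section

/-- The max-plus semiring `ℝmax = ℝ ∪ {-∞}`. Its `Add` is the max-plus
"multiplication" `a ⊗ b = a + b` (with `-∞` absorbing), its `max` is the
max-plus "addition". -/
abbrev Rmax := WithBot ℝ

/-- The order topology on `WithBot ℝ` (the topology of the metric
`d(a,b) = |exp a - exp b|`). -/
instance : TopologicalSpace Rmax := Preorder.topology Rmax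
instance : OrderTopology Rmax := ⟨rfl⟩

/-- Vectors of the max-plus semimodule `ℝmax^n`. -/
abbrev RmaxVec (n : ℕ) := Fin n → Rmax

/-- The max-plus linear combination `xλ ⊕ yμ`. -/
def maxComb {n : ℕ} (x y : RmaxVec n) (lam mu : Rmax) : RmaxVec n :=
  fun i => max (x i + lam) (y i + mu)

/-- `V ⊆ ℝmax^n` is a (max-plus) subsemimodule. -/
def IsSubsemimodule {n : ℕ} (V : Set (RmaxVec n)) : Prop :=
  ∀ x ∈ V, ∀ y ∈ V, ∀ lam mu : Rmax, maxComb x y lam mu ∈ V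

/-- `W ⊆ (ℝmax^n)² ≅ ℝmax^{2n}` is a (max-plus) subsemimodule,
with the entrywise operations. -/
def IsSubsemimodulePair {n : ℕ} (W : Set (RmaxVec n × RmaxVec n)) : Prop :=
  ∀ p ∈ W, ∀ q ∈ W, ∀ lam mu : Rmax,
    (maxComb p.1 q.1 lam mu, maxComb p.2 q.2 lam mu) ∈ W

/-- A pre-congruence: a subsemimodule of `(ℝmax^n)²` containing the diagonal
and transitive. -/
def IsPrecongruence {n : ℕ} (W : Set (RmaxVec n × RmaxVec n)) : Prop :=
  IsSubsemimodulePair W ∧ (∀ f : RmaxVec n, (f, f) ∈ W) ∧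
    ∀ f g h : RmaxVec n, (f, g) ∈ W → (g, h) ∈ W → (f, h) ∈ W

/-- A polar cone: a pre-congruence such that `f ≤ g` implies `(f,g) ∈ W`. -/
def IsPolarCone {n : ℕ} (W : Set (RmaxVec n × RmaxVec n)) : Prop :=
  IsPrecongruence W ∧ ∀ f g : RmaxVec n, f ≤ g → (f, g) ∈ W

/-- A congruence: a symmetric pre-congruence. -/
def IsCongruence {n : ℕ} (W : Set (RmaxVec n × RmaxVec n)) : Prop :=
  IsPrecongruence W ∧ ∀ f g : RmaxVec n, (f, g) ∈ W → (g, f) ∈ W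

/-- The max-plus bracket `⟨y, x⟩ = max_i (y_i + x_i)`. -/
def mpBracket {n : ℕ} (y x : RmaxVec n) : Rmax :=
  Finset.univ.sup fun i => y i + x i

/-- The polar `V°` of `V ⊆ ℝmax^n`. -/
def mpPolar {n : ℕ} (V : Set (RmaxVec n)) : Set (RmaxVec n × RmaxVec n) :=
  { p | ∀ x ∈ V, mpBracket p.1 x ≤ mpBracket p.2 x }

/-- The orthogonal `V⊥` of `V ⊆ ℝmax^n`. -/
def mpOrtho {n : ℕ} (V : Set (RmaxVec n)) : Set (RmaxVec n × RmaxVec n) :=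
  { p | ∀ x ∈ V, mpBracket p.1 x = mpBracket p.2 x }

/-- The dual polar `W⋄` of `W ⊆ (ℝmax^n)²`. -/
def mpDiamond {n : ℕ} (W : Set (RmaxVec n × RmaxVec n)) : Set (RmaxVec n) :=
  { x | ∀ p ∈ W, mpBracket p.1 x ≤ mpBracket p.2 x }

/-- The dual orthogonal `W⊤` of `W ⊆ (ℝmax^n)²`. -/
def mpTop {n : ℕ} (W : Set (RmaxVec n × RmaxVec n)) : Set (RmaxVec n) :=
  { x | ∀ p ∈ W, mpBracket p.1 x = mpBracket p.2 x }

/-- The canonical embedding of `ℝmax = ℝ ∪ {-∞}` into `EReal = ℝ ∪ {±∞}`. -/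
def toE : Rmax → EReal := WithBot.recBotCoe ⊥ (fun x => (x : EReal))

/-- The entrywise supremum `ḡ ∈ EReal^n` of `{ f | (f,g) ∈ W }`,
computed in `EReal`. -/
def ebar {n : ℕ} (W : Set (RmaxVec n × RmaxVec n)) (g : RmaxVec n) :
    Fin n → EReal :=
  fun i => sSup { a : EReal | ∃ f : RmaxVec n, (f, g) ∈ W ∧ a = toE (f i) }

/-- The residuation `u∖x = sSup { λ | ∀ i, u_i + λ ≤ x_i }` in `EReal`. -/
def eres {n : ℕ} (u x : Fin n → EReal) : EReal :=
  sSup { lam : EReal | ∀ i, u i + lam ≤ x i }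

/-- `z^β`: the vector in `ℝmax^n` obtained from `z ∈ EReal^n` by replacing the
entries equal to `+∞` by `β` and keeping the other entries. -/
def cut {n : ℕ} (z : Fin n → EReal) (b : Rmax) : RmaxVec n :=
  fun i => if z i = ⊤ then b else if z i = ⊥ then ⊥ else ((z i).toReal : ℝ)

-- AUX START
section Aux

lemma toE_bot' : toE (⊥ : Rmax) = (⊥ : EReal) := rfl
lemma toE_coe' (r : ℝ) : toE ((r : ℝ) : Rmax) = (r : EReal) := rfl

lemma toE_le_toE {a b : Rmax} (h : a ≤ b) : toE a ≤ toE b := by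
  induction a using WithBot.recBotCoe with
  | bot => exact bot_le
  | coe x =>
    induction b using WithBot.recBotCoe with
    | bot => exact absurd h (by simp)
    | coe y =>
      rw [toE_coe', toE_coe']
      exact_mod_cast WithBot.coe_le_coe.mp h

lemma le_of_toE_le {a b : Rmax} (h : toE a ≤ toE b) : a ≤ b := by
  induction a using WithBot.recBotCoe with
  | bot => exact bot_le
  | coe x =>
    induction b using WithBot.recBotCoe with
    | bot =>
      rw [toE_coe', toE_bot'] at h
      exact absurd h (by simp)
    | coe y =>
      rw [toE_coe', toE_coe'] at h
      exact_mod_cast EReal.coe_le_coe_iff.mp h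

lemma lt_of_toE_lt {a b : Rmax} (h : toE a < toE b) : a < b :=
  lt_of_not_ge fun hba => absurd (toE_le_toE hba) (not_le_of_gt h)

lemma eq_bot_of_toE_le_bot {a : Rmax} (h : toE a ≤ ⊥) : a = ⊥ := by
  induction a using WithBot.recBotCoe with
  | bot => rfl
  | coe x =>
    rw [toE_coe'] at h
    exact absurd (le_bot_iff.mp h) (EReal.coe_ne_bot x)

/-- pointwise max of two related pairs is related (λ = μ = 0). -/
lemma pre_max {n : ℕ} {W : Set (RmaxVec n × RmaxVec n)} (hW : IsSubsemimodulePair W)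
    {a b a' b' : RmaxVec n} (h : (a, b) ∈ W) (h' : (a', b') ∈ W) :
    ((fun i => max (a i) (a' i)), (fun i => max (b i) (b' i))) ∈ W := by
  have h2 := hW (a, b) h (a', b') h' ((0 : ℝ) : Rmax) ((0 : ℝ) : Rmax)
  have e : ∀ x y : RmaxVec n, maxComb x y ((0 : ℝ) : Rmax) ((0 : ℝ) : Rmax)
      = fun i => max (x i) (y i) := by
    intro x y; funext i; simp [maxComb]
  rwa [e, e] at h2

lemma g_le_ebar {n : ℕ} {W : Set (RmaxVec n × RmaxVec n)} {g : RmaxVec n}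
    (hg : (g, g) ∈ W) (i : Fin n) : toE (g i) ≤ ebar W g i :=
  le_sSup ⟨g, hg, rfl⟩

lemma g_le_cut {n : ℕ} {z : Fin n → EReal} {g : RmaxVec n} {b : Rmax}
    (hg : ∀ i, toE (g i) ≤ z i) (hb : ∀ i, g i ≤ b) (i : Fin n) : g i ≤ cut z b i := by
  unfold cut
  split_ifs with h1 h2
  · exact hb i
  · have := hg i; rw [h2] at this
    simp [eq_bot_of_toE_le_bot this]
  · apply le_of_toE_le
    rw [toE_coe', EReal.coe_toReal h1 h2]
    exact hg i

/-- Main lemma: the polar-cone case. -/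
theorem polar_case (n : ℕ) (W : Set (RmaxVec n × RmaxVec n))
    (hclosed : IsClosed W) (hW : IsPolarCone W)
    (g : RmaxVec n) (β : Rmax) (hβ : ∀ i, g i ≤ β) :
    (cut (ebar W g) β, g) ∈ W := by
  set z := ebar W g with hz
  set c := cut z β with hc
  have hgW : (g, g) ∈ W := hW.1.2.1 g
  -- downward closedness of the class of g
  have hdown : ∀ f : RmaxVec n, (f, g) ∈ W → ∀ f' : RmaxVec n, f' ≤ f → (f', g) ∈ W := by
    intro f hf f' hle
    exact hW.1.2.2 f' f g (hW.2 f' f hle) hf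
  have hmax : ∀ f f' : RmaxVec n, (f, g) ∈ W → (f', g) ∈ W →
      ((fun i => max (f i) (f' i)), g) ∈ W := by
    intro f f' hf hf'
    have := pre_max hW.1.1 hf hf'
    simpa using this
  have hbotvec : ((fun _ => (⊥ : Rmax)) , g) ∈ W := hdown g hgW _ (fun i => bot_le)
  have hle_z : ∀ f : RmaxVec n, (f, g) ∈ W → ∀ i, toE (f i) ≤ z i :=
    fun f hf i => le_sSup ⟨f, hf, rfl⟩
  have hcz : ∀ i, toE (c i) ≤ z i := by
    intro i
    rw [hc]; unfold cut
    split_ifs with h1 h2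
    · rw [h1]; exact le_top
    · rw [toE_bot', h2]
    · rw [toE_coe', EReal.coe_toReal h1 h2]
  -- capped witnesses: elements of the class below c with large i-th coordinate
  have claim : ∀ (i : Fin n) (w : ℝ), (w : EReal) < toE (c i) →
      ∃ f : RmaxVec n, (f, g) ∈ W ∧ (∀ j, f j ≤ c j) ∧ ((w : ℝ) : Rmax) < f i := by
    intro i w hw
    have hwz : (w : EReal) < z i := lt_of_lt_of_le hw (hcz i)
    obtain ⟨a, ⟨f₀, hf₀, rfl⟩, hwa⟩ := lt_sSup_iff.mp hwz
    refine ⟨fun j => min (f₀ j) (c j), hdown f₀ hf₀ _ (fun j => min_le_left _ _),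
      fun j => min_le_right _ _, ?_⟩
    apply lt_min
    · exact lt_of_toE_lt (by rw [toE_coe']; exact hwa)
    · exact lt_of_toE_lt (by rw [toE_coe']; exact hw)
  -- choice of approximating witnesses
  have hQ : ∀ (i : Fin n) (k : ℕ), ∃ f : RmaxVec n, (f, g) ∈ W ∧ (∀ j, f j ≤ c j) ∧
      ∀ r : ℝ, c i = ((r : ℝ) : Rmax) → (((r - ((k : ℝ) + 1)⁻¹ : ℝ)) : Rmax) < f i := by
    intro i k
    by_cases h : ∃ r : ℝ, c i = ((r : ℝ) : Rmax)
    · obtain ⟨r, hr⟩ := h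
      have hlt : ((r - ((k : ℝ) + 1)⁻¹ : ℝ) : EReal) < toE (c i) := by
        rw [hr, toE_coe']
        exact_mod_cast sub_lt_self r (by positivity)
      obtain ⟨f, h1, h2, h3⟩ := claim i _ hlt
      refine ⟨f, h1, h2, fun r' hr' => ?_⟩
      have : r = r' := by
        rw [hr] at hr'; exact_mod_cast hr'
      rwa [← this]
    · refine ⟨fun _ => ⊥, hbotvec, fun j => bot_le, fun r hr => absurd ⟨r, hr⟩ h⟩
  choose u hu1 hu2 hu3 using hQ
  set hseq : ℕ → RmaxVec n := fun k j => Finset.univ.sup (fun i => u i k j) with hh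
  have hmem : ∀ k, (hseq k, g) ∈ W := by
    intro k
    have key : ∀ s : Finset (Fin n), ((fun j => s.sup fun i => u i k j), g) ∈ W := by
      intro s
      induction s using Finset.induction_on with
      | empty => simpa using hbotvec
      | @insert a s ha ih =>
        have := hmax (u a k) (fun j => s.sup fun i => u i k j) (hu1 a k) ih
        simpa [Finset.sup_insert] using this
    exact key Finset.univ
  have hlec : ∀ k j, hseq k j ≤ c j := by
    intro k j
    exact Finset.sup_le fun i _ => hu2 i k j
  have hlow : ∀ (k : ℕ) (j : Fin n) (r : ℝ), c j = ((r : ℝ) : Rmax) →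
      (((r - ((k : ℝ) + 1)⁻¹ : ℝ)) : Rmax) < hseq k j := by
    intro k j r hr
    exact lt_of_lt_of_le (hu3 j k r hr) (Finset.le_sup (f := fun i => u i k j) (Finset.mem_univ j))
  -- convergence
  have htend : Filter.Tendsto hseq Filter.atTop (nhds c) := by
    rw [tendsto_pi_nhds]
    intro j
    rcases hcj : c j with _ | r
    ·
      have : (fun k => hseq k j) = fun _ => (⊥ : Rmax) := by
        funext k
        have := hlec k j
        rw [hcj] at this
        exact le_bot_iff.mp this
      rw [this]
      exact tendsto_const_nhds
    · have hcj' : c j = ((r : ℝ) : Rmax) := hcj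
      have goal' : Filter.Tendsto (fun k => hseq k j) Filter.atTop (nhds (((r : ℝ) : Rmax))) := by
        rw [tendsto_order]
        constructor
        · intro a ha
          induction a using WithBot.recBotCoe with
          | bot =>
            refine Filter.Eventually.of_forall fun k => ?_
            exact lt_of_le_of_lt bot_le (hlow k j r hcj')
          | coe s =>
            have hsr : s < r := WithBot.coe_lt_coe.mp ha
            have hev : ∀ᶠ k : ℕ in Filter.atTop, ((k : ℝ) + 1)⁻¹ < r - s := by
              have h0 : Filter.Tendsto (fun k : ℕ => ((k : ℝ) + 1)⁻¹) Filter.atTop (nhds 0) := by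
                simpa [one_div] using tendsto_one_div_add_atTop_nhds_zero_nat (𝕜 := ℝ)
              exact h0.eventually_lt_const (by linarith)
            refine hev.mono fun k hk => ?_
            calc ((s : ℝ) : Rmax) < (((r - ((k : ℝ) + 1)⁻¹ : ℝ)) : Rmax) :=
                  WithBot.coe_lt_coe.mpr (by linarith)
              _ < hseq k j := hlow k j r hcj'
        · intro b hb
          refine Filter.Eventually.of_forall fun k => ?_
          have h1 : hseq k j ≤ ((r : ℝ) : Rmax) := hcj' ▸ hlec k j
          exact lt_of_le_of_lt h1 hb
      exact goal'
  have htend2 : Filter.Tendsto (fun k => (hseq k, g)) Filter.atTop (nhds (c, g)) := by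
    rw [nhds_prod_eq]; exact htend.prodMk tendsto_const_nhds
  exact hclosed.mem_of_tendsto htend2 (Filter.Eventually.of_forall hmem)

end Aux

section Congr

variable {n : ℕ} {W : Set (RmaxVec n × RmaxVec n)}

/-- The polar cone associated with a congruence. -/
def assocPolar (W : Set (RmaxVec n × RmaxVec n)) : Set (RmaxVec n × RmaxVec n) :=
  { p | ((fun i => max (p.1 i) (p.2 i)), p.2) ∈ W }

lemma join_mem (hW : IsCongruence W) {a b : RmaxVec n} (h : (a, b) ∈ W) :
    ((fun i => max (a i) (b i)), b) ∈ W := by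
  have h2 := pre_max hW.1.1 h (hW.1.2.1 b)
  simpa using h2

/-- Order convexity of congruence classes. -/
lemma order_convex (hW : IsCongruence W) {a b v : RmaxVec n} (hab : (a, b) ∈ W)
    (h1 : b ≤ v) (h2 : v ≤ a) : (v, b) ∈ W := by
  have h3 := pre_max hW.1.1 hab (hW.1.2.1 v)
  have e1 : (fun i => max (a i) (v i)) = a := funext fun i => max_eq_left (h2 i)
  have e2 : (fun i => max (b i) (v i)) = v := funext fun i => max_eq_right (h1 i)
  rw [e1, e2] at h3
  exact hW.1.2.2 v a b (hW.2 a v h3) hab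

lemma assocPolar_isPolarCone (hW : IsCongruence W) : IsPolarCone (assocPolar W) := by
  constructor
  · refine ⟨?_, ?_, ?_⟩
    · -- subsemimodule
      intro p hp q hq lam mu
      have h2 := hW.1.1 _ hp _ hq lam mu
      have e : (maxComb (fun i => max (p.1 i) (p.2 i)) (fun i => max (q.1 i) (q.2 i)) lam mu)
          = fun i => max ((maxComb p.1 q.1 lam mu) i) ((maxComb p.2 q.2 lam mu) i) := by
        funext i
        simp only [maxComb, ← max_add_add_right]
        exact max_max_max_comm _ _ _ _
      rw [e] at h2
      exact h2
    · -- diagonal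
      intro f
      show ((fun i => max (f i) (f i)), f) ∈ W
      simpa using hW.1.2.1 f
    · -- transitivity
      intro f g' h' hfg hgh
      have step1 := pre_max hW.1.1 hfg (hW.1.2.1 h')
      have step2 := hW.1.2.2 _ _ _ step1 hgh
      have := order_convex hW step2 (v := fun i => max (f i) (h' i))
        (fun i => le_max_right _ _)
        (fun i => max_le_max (le_max_left _ _) (le_refl _))
      exact this
  · -- polar property
    intro f g' hle
    show ((fun i => max (f i) (g' i)), g') ∈ W
    have e : (fun i => max (f i) (g' i)) = g' := funext fun i => max_eq_right (hle i)
    rw [e]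
    exact hW.1.2.1 g'

lemma assocPolar_isClosed (hcl : IsClosed W) : IsClosed (assocPolar W) := by
  have hcont : Continuous (fun p : RmaxVec n × RmaxVec n =>
      ((fun i => max (p.1 i) (p.2 i)), p.2)) := by
    refine Continuous.prodMk ?_ continuous_snd
    refine continuous_pi fun i => Continuous.max ?_ ?_
    · exact (continuous_apply i).comp continuous_fst
    · exact (continuous_apply i).comp continuous_snd
  exact hcl.preimage hcont

lemma ebar_assocPolar (hW : IsCongruence W) (g : RmaxVec n) :
    ebar (assocPolar W) g = ebar W g := by
  funext i
  apply le_antisymm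
  · apply sSup_le
    rintro a ⟨f, hf, rfl⟩
    have hj : ((fun i => max (f i) (g i)), g) ∈ W := hf
    have h1 : toE (f i) ≤ toE (max (f i) (g i)) := toE_le_toE (le_max_left _ _)
    have h2 : toE (max (f i) (g i)) ≤ ebar W g i :=
      le_sSup ⟨fun j => max (f j) (g j), hj, rfl⟩
    exact le_trans h1 h2
  · apply sSup_le
    rintro a ⟨f, hf, rfl⟩
    exact le_sSup ⟨f, join_mem hW hf, rfl⟩

end Congr


/-- Corollary 4.3 of the paper: if `W ⊆ (ℝmax^n)²` is a closed congruence or a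
closed polar cone, `g ∈ ℝmax^n`, and `β ≥ g_i` for all `i`, then
`(ḡ^β, g) ∈ W`. -/
theorem ebar_cut_mem (n : ℕ) (W : Set (RmaxVec n × RmaxVec n))
    (hclosed : IsClosed W) (hW : IsCongruence W ∨ IsPolarCone W)
    (g : RmaxVec n) (β : Rmax) (hβ : ∀ i, g i ≤ β) :
    (cut (ebar W g) β, g) ∈ W := by
  rcases hW with hC | hP
  · have hP' := assocPolar_isPolarCone hC
    have hcl' := assocPolar_isClosed (W := W) hclosed
    have hmem := polar_case n (assocPolar W) hcl' hP' g β hβ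
    rw [ebar_assocPolar hC g] at hmem
    have hgc : ∀ i, g i ≤ cut (ebar W g) β i :=
      g_le_cut (fun i => g_le_ebar (hC.1.2.1 g) i) hβ
    have hmem2 : ((fun i => max (cut (ebar W g) β i) (g i)), g) ∈ W := hmem
    have e : (fun i => max (cut (ebar W g) β i) (g i)) = cut (ebar W g) β :=
      funext fun i => max_eq_left (hgc i)
    rwa [e] at hmem2
  · exact polar_case n W hclosed hP g β hβ
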